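/- Let n, r, s be integers with n ≥ 2r+1, r ≥ 0, s ≥ 1, and let g_{n,r,s} denote the unique real root ≥ 1 of Λ_{n,r,s}. Then: (i) g_{n,r,1} = 1; (ii) if s > 1 then g_{n,r,s} > 1; and (iii) if r > 0 and s > 1 then g_{n,r,s} > g_{n−1,r−1,s}. -/

import Mathlib

/-- `Λ_{n,r,s}(τ) = (1/n!)·(τ^n − s·Σ_{j=0}^r C(n,j)·(τ−1)^j)`. -/
noncomputable def Lam (n r s : ℕ) (τ : ℝ) : ℝ :=
  (1 / (Nat.factorial n : ℝ)) *
    (τ ^ n - (s : ℝ) * ∑ j ∈ Finset.range (r + 1), (Nat.choose n j : ℝ) * (τ - 1) ^ j)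

lemma fact_pos' (n : ℕ) : (0:ℝ) < (Nat.factorial n : ℝ) := by
  exact_mod_cast n.factorial_pos

lemma lam_one (n r s : ℕ) : Lam n r s 1 = (1 - (s:ℝ)) / (Nat.factorial n : ℝ) := by
  unfold Lam
  rw [Finset.sum_eq_single 0]
  · simp; ring
  · intro j _ hj0; simp [zero_pow hj0]
  · intro h; simp at h

lemma lam_continuous (n r s : ℕ) : Continuous (Lam n r s) := by
  unfold Lam; fun_prop

lemma lam_hasDerivAt (n r s : ℕ) (x : ℝ) :
    HasDerivAt (Lam (n+1) (r+1) s) (Lam n r s x) x := by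
  have h1 : HasDerivAt (fun y : ℝ => y ^ (n+1)) (((n:ℝ)+1) * x ^ n) x := by
    simpa using hasDerivAt_pow (n+1) x
  have h2 : ∀ j : ℕ, HasDerivAt (fun y : ℝ => (Nat.choose (n+1) j : ℝ) * (y - 1) ^ j)
      ((Nat.choose (n+1) j : ℝ) * ((j : ℝ) * (x - 1) ^ (j-1) * 1)) x := by
    intro j
    exact (((hasDerivAt_id x).sub_const 1).pow j).const_mul _
  have hsum : HasDerivAt
      (fun y : ℝ => ∑ j ∈ Finset.range (r+2), (Nat.choose (n+1) j : ℝ) * (y-1)^j)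
      (∑ j ∈ Finset.range (r+2), (Nat.choose (n+1) j : ℝ) * ((j:ℝ) * (x-1)^(j-1) * 1)) x :=
    HasDerivAt.fun_sum fun j _ => h2 j
  have h := ((h1.sub (hsum.const_mul (s:ℝ))).const_mul (1 / ((Nat.factorial (n+1)) : ℝ)))
  have heq : Lam n r s x = (1 / ((Nat.factorial (n+1)) : ℝ)) *
      (((n:ℝ)+1) * x ^ n - (s:ℝ) * ∑ j ∈ Finset.range (r+2),
        (Nat.choose (n+1) j : ℝ) * ((j:ℝ) * (x-1)^(j-1) * 1)) := by
    rw [Finset.sum_range_succ']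
    simp only [Nat.cast_zero, zero_mul, mul_zero, add_zero, Nat.add_sub_cancel, Nat.cast_add,
      Nat.cast_one, mul_one]
    have hsum2 : ∑ i ∈ Finset.range (r+1), ((Nat.choose (n+1) (i+1)) : ℝ) * (((i:ℝ)+1) * (x-1)^i)
        = ((n:ℝ)+1) * ∑ i ∈ Finset.range (r+1), (Nat.choose n i : ℝ) * (x-1)^i := by
      rw [Finset.mul_sum]
      refine Finset.sum_congr rfl fun i _ => ?_
      have key : ((Nat.choose (n+1) (i+1)) : ℝ) * ((i:ℝ)+1) = ((n:ℝ)+1) * (Nat.choose n i : ℝ) := by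
        exact_mod_cast (Nat.add_one_mul_choose_eq n i).symm
      linear_combination (x-1)^i * key
    rw [hsum2]
    unfold Lam
    rw [Nat.factorial_succ]
    have := fact_pos' n
    push_cast
    field_simp
  rw [heq]
  exact h

lemma lam_aux (n r s : ℕ) (hs : 1 < s) (ρ : ℝ) (h1 : 1 ≤ ρ)
    (hneg : ∀ y : ℝ, 1 ≤ y → y < ρ → Lam n r s y < 0)
    (hpos : ∀ y : ℝ, ρ < y → 0 < Lam n r s y) :
    (∀ y : ℝ, 1 ≤ y → y ≤ ρ → Lam (n+1) (r+1) s y < 0) ∧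
    StrictMonoOn (Lam (n+1) (r+1) s) (Set.Ici ρ) := by
  have hone : Lam (n+1) (r+1) s 1 < 0 := by
    rw [lam_one]
    apply div_neg_of_neg_of_pos _ (fact_pos' _)
    have : (1:ℝ) < s := by exact_mod_cast hs
    linarith
  have hanti : StrictAntiOn (Lam (n+1) (r+1) s) (Set.Icc 1 ρ) :=
    strictAntiOn_of_deriv_neg (convex_Icc 1 ρ) ((lam_continuous _ _ _).continuousOn)
      (fun x hx => by
        rw [interior_Icc] at hx
        rw [(lam_hasDerivAt n r s x).deriv]
        exact hneg x hx.1.le hx.2)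
  constructor
  · intro y hy1 hyρ
    have : Lam (n+1) (r+1) s y ≤ Lam (n+1) (r+1) s 1 :=
      hanti.antitoneOn ⟨le_rfl, h1⟩ ⟨hy1, hyρ⟩ hy1
    linarith
  · exact strictMonoOn_of_deriv_pos (convex_Ici ρ) ((lam_continuous _ _ _).continuousOn)
      (fun x hx => by
        rw [interior_Ici] at hx
        rw [(lam_hasDerivAt n r s x).deriv]
        exact hpos x hx)

lemma lam_sign (r : ℕ) : ∀ n s : ℕ, r + 1 ≤ n → 1 < s → ∀ ρ : ℝ, 1 ≤ ρ → Lam n r s ρ = 0 →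
    (∀ y : ℝ, 1 ≤ y → y < ρ → Lam n r s y < 0) ∧ (∀ y : ℝ, ρ < y → 0 < Lam n r s y) := by
  induction r with
  | zero =>
    intro n s hn hs ρ hρ1 hρ
    have hL : ∀ y : ℝ, Lam n 0 s y = (1/(Nat.factorial n:ℝ)) * (y^n - s) := by
      intro y; unfold Lam; simp
    have hfac : (0:ℝ) < 1 / (Nat.factorial n : ℝ) := by
      have := fact_pos' n; positivity
    have hρn : ρ ^ n = s := by
      rw [hL] at hρ
      rcases mul_eq_zero.mp hρ with h | h
      · exact absurd h (ne_of_gt hfac)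
      · linarith
    constructor
    · intro y hy1 hyρ
      rw [hL]
      apply mul_neg_of_pos_of_neg hfac
      have : y ^ n < ρ ^ n := pow_lt_pow_left₀ hyρ (by linarith) (by omega)
      linarith
    · intro y hρy
      rw [hL]
      apply mul_pos hfac
      have : ρ ^ n < y ^ n := pow_lt_pow_left₀ hρy (by linarith) (by omega)
      linarith
  | succ r ih =>
    intro n s hn hs ρ hρ1 hρ
    obtain ⟨m, rfl⟩ : ∃ m, n = m + 1 := ⟨n - 1, by omega⟩
    have hrm : r + 1 ≤ m := by omega
    have hone : Lam (m+1) (r+1) s 1 < 0 := by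
      rw [lam_one]
      apply div_neg_of_neg_of_pos _ (fact_pos' _)
      have : (1:ℝ) < s := by exact_mod_cast hs
      linarith
    by_cases hex : ∃ c : ℝ, 1 ≤ c ∧ Lam m r s c = 0
    · obtain ⟨c, hc1, hc0⟩ := hex
      obtain ⟨hneg, hpos⟩ := ih m s hrm hs c hc1 hc0
      obtain ⟨hA, hmono⟩ := lam_aux m r s hs c hc1 hneg hpos
      have hcρ : c < ρ := by
        by_contra h
        push_neg at h
        exact absurd hρ (ne_of_lt (hA ρ hρ1 h))
      refine ⟨fun y hy1 hyρ => ?_, fun y hρy => ?_⟩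
      · rcases le_or_gt y c with h | h
        · exact hA y hy1 h
        · have := hmono (Set.mem_Ici.mpr h.le) (Set.mem_Ici.mpr hcρ.le) hyρ
          linarith
      · have := hmono (Set.mem_Ici.mpr hcρ.le) (Set.mem_Ici.mpr (by linarith : c ≤ y)) hρy
        linarith
    · push_neg at hex
      exfalso
      have hD1 : Lam m r s 1 < 0 := by
        rw [lam_one]
        apply div_neg_of_neg_of_pos _ (fact_pos' _)
        have : (1:ℝ) < s := by exact_mod_cast hs
        linarith
      have hDneg : ∀ y : ℝ, 1 ≤ y → Lam m r s y < 0 := by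
        intro y hy
        rcases lt_trichotomy (Lam m r s y) 0 with h | h | h
        · exact h
        · exact absurd h (hex y hy)
        · obtain ⟨z, hz, hz0⟩ := intermediate_value_Icc hy
            ((lam_continuous m r s).continuousOn) ⟨hD1.le, h.le⟩
          exact absurd hz0 (hex z hz.1)
      have hanti : StrictAntiOn (Lam (m+1) (r+1) s) (Set.Ici 1) :=
        strictAntiOn_of_deriv_neg (convex_Ici 1) ((lam_continuous _ _ _).continuousOn)
          (fun x hx => by
            rw [interior_Ici] at hx
            rw [(lam_hasDerivAt m r s x).deriv]
            exact hDneg x hx.le)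
      have : Lam (m+1) (r+1) s ρ ≤ Lam (m+1) (r+1) s 1 :=
        hanti.antitoneOn (Set.mem_Ici.mpr le_rfl) (Set.mem_Ici.mpr hρ1) hρ1
      linarith

/-- With `g = g_{n,r,s}` the unique real root `≥ 1` of `Λ_{n,r,s}`:
(i) `g_{n,r,1} = 1`; (ii) if `s > 1` then `g_{n,r,s} > 1`; (iii) if `r > 0` and `s > 1`
then `g_{n,r,s} > g_{n−1,r−1,s}` (any root `≥ 1` of `Λ_{n−1,r−1,s}` is `< g`). -/
theorem stmt_7 (n r s : ℕ) (hn : 2 * r + 1 ≤ n) (hs : 1 ≤ s)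
    (g : ℝ) (hg1 : 1 ≤ g) (hg : Lam n r s g = 0) :
    (s = 1 → g = 1) ∧
    (1 < s → 1 < g) ∧
    (0 < r → 1 < s → ∀ g' : ℝ, 1 ≤ g' → Lam (n - 1) (r - 1) s g' = 0 → g' < g) := by

  refine ⟨?_, ?_, ?_⟩
  · rintro rfl
    have hfac : (0:ℝ) < 1 / (Nat.factorial n : ℝ) := by
      have := fact_pos' n; positivity
    have hsum : g ^ n = ∑ j ∈ Finset.range (r+1), (Nat.choose n j : ℝ) * (g-1)^j := by
      unfold Lam at hg
      rcases mul_eq_zero.mp hg with h | h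
      · exact absurd h (ne_of_gt hfac)
      · push_cast at h; linarith
    have hbin : g ^ n = ∑ j ∈ Finset.range (n+1), (Nat.choose n j : ℝ) * (g-1)^j := by
      have h := add_pow (g-1) (1:ℝ) n
      simp only [sub_add_cancel, one_pow, mul_one] at h
      rw [h]
      exact Finset.sum_congr rfl fun j _ => by ring
    have hsplit := Finset.sum_range_add_sum_Ico
      (fun j => (Nat.choose n j : ℝ) * (g-1)^j) (show r+1 ≤ n+1 by omega)
    have hzero : ∑ j ∈ Finset.Ico (r+1) (n+1), (Nat.choose n j : ℝ) * (g-1)^j = 0 := by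
      linarith
    have hterm : (Nat.choose n n : ℝ) * (g-1)^n = 0 := by
      have := (Finset.sum_eq_zero_iff_of_nonneg
        (fun j _ => mul_nonneg (by positivity) (pow_nonneg (by linarith) j))).mp hzero n (Finset.mem_Ico.mpr ⟨by omega, by omega⟩)
      exact this
    simp only [Nat.choose_self, Nat.cast_one, one_mul] at hterm
    have := pow_eq_zero_iff (show n ≠ 0 by omega) |>.mp hterm
    linarith
  · intro hs1
    rcases hg1.lt_or_eq with h | h
    · exact h
    · exfalso
      rw [← h, lam_one] at hg
      have hlt : (1 - (s:ℝ)) / (Nat.factorial n : ℝ) < 0 := by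
        apply div_neg_of_neg_of_pos _ (fact_pos' _)
        have : (1:ℝ) < s := by exact_mod_cast hs1
        linarith
      linarith
  · intro hr hs1 g' hg'1 hg'
    obtain ⟨r', rfl⟩ : ∃ r', r = r' + 1 := ⟨r-1, by omega⟩
    obtain ⟨m, rfl⟩ : ∃ m, n = m + 1 := ⟨n-1, by omega⟩
    simp only [Nat.add_sub_cancel] at hg'
    have hrm : r' + 1 ≤ m := by omega
    obtain ⟨hneg, hpos⟩ := lam_sign r' m s hrm hs1 g' hg'1 hg'
    obtain ⟨hA, _⟩ := lam_aux m r' s hs1 g' hg'1 hneg hpos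
    by_contra h
    push_neg at h
    exact absurd hg (ne_of_lt (hA g hg1 h))
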